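/- arXiv:alg-geom/9510014 — 3 statements merged into one kernel-verified Lean document; each statement's English description precedes it below -/
import Mathlib

section
/- Let Λ ⊂ ℝ^k be a full-dimensional closed convex cone with Λ ∩ (−Λ) = {0}, and let s approach a boundary point of Λ from within the interior Λ°. Then X_Λ(s) → ∞. -/
open MeasureTheory Filter

/-- The dual cone of a cone `Λ ⊆ ℝ^k` (with respect to the standard pairing). -/
def dualCone {k : ℕ} (Λ : Set (Fin k → ℝ)) : Set (Fin k → ℝ) :=
  {y | ∀ x ∈ Λ, 0 ≤ ∑ i, x i * y i}

/-- The (real) X-function of a cone: `X_Λ(s) = ∫_{Λ*} e^{-⟨s,y⟩} dy`. -/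
noncomputable def XFunR {k : ℕ} (Λ : Set (Fin k → ℝ)) (s : Fin k → ℝ) : ℝ :=
  ∫ y in dualCone Λ, Real.exp (-∑ i, s i * y i)

open Set Real

lemma contPair {k : ℕ} (x : Fin k → ℝ) : Continuous fun y : Fin k → ℝ => ∑ i, x i * y i := by
  fun_prop

lemma dualCone_isClosed {k : ℕ} (Λ : Set (Fin k → ℝ)) : IsClosed (dualCone Λ) := by
  have : dualCone Λ = ⋂ x ∈ Λ, {y : Fin k → ℝ | 0 ≤ ∑ i, x i * y i} := by
    ext y; simp [dualCone]
  rw [this]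
  exact isClosed_biInter fun x _ => isClosed_le continuous_const (contPair x)

lemma dualCone_add {k : ℕ} {Λ : Set (Fin k → ℝ)} {y z : Fin k → ℝ}
    (hy : y ∈ dualCone Λ) (hz : z ∈ dualCone Λ) : y + z ∈ dualCone Λ := by
  intro x hx
  have := add_nonneg (hy x hx) (hz x hx)
  simpa [mul_add, Finset.sum_add_distrib] using this

lemma dualCone_smul {k : ℕ} {Λ : Set (Fin k → ℝ)} {c : ℝ} {y : Fin k → ℝ}
    (hc : 0 ≤ c) (hy : y ∈ dualCone Λ) : c • y ∈ dualCone Λ := by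
  intro x hx
  have := mul_nonneg hc (hy x hx)
  simp only [Pi.smul_apply, smul_eq_mul]
  calc (0:ℝ) ≤ c * ∑ i, x i * y i := this
  _ = ∑ i, x i * (c * y i) := by rw [Finset.mul_sum]; exact Finset.sum_congr rfl fun i _ => by ring

lemma dualCone_convex {k : ℕ} (Λ : Set (Fin k → ℝ)) : Convex ℝ (dualCone Λ) := by
  intro y hy z hz a b ha hb _
  exact dualCone_add (dualCone_smul ha hy) (dualCone_smul hb hz)

lemma clm_eq_sum {k : ℕ} (f : (Fin k → ℝ) →L[ℝ] ℝ) (x : Fin k → ℝ) :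
    f x = ∑ i, x i * f (fun j => if i = j then 1 else 0) := by
  conv_lhs => rw [pi_eq_sum_univ x]
  rw [map_sum]
  simp [smul_eq_mul]

/-- bipolar inclusion -/
lemma bipolar {k : ℕ} {Λ : Set (Fin k → ℝ)} (hcl : IsClosed Λ) (hconv : Convex ℝ Λ)
    (hcone : ∀ c : ℝ, 0 < c → ∀ x ∈ Λ, c • x ∈ Λ) (h0 : (0:Fin k → ℝ) ∈ Λ)
    {v : Fin k → ℝ} (hv : v ∈ dualCone (dualCone Λ)) : v ∈ Λ := by
  by_contra hvn
  obtain ⟨f, u, hfu, huv⟩ := geometric_hahn_banach_closed_point hconv hcl hvn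
  have hu0 : 0 < u := by simpa using hfu 0 h0
  -- f ≤ 0 on Λ
  have hfle : ∀ x ∈ Λ, f x ≤ 0 := by
    intro x hx
    by_contra hpos
    push_neg at hpos
    obtain ⟨t, ht, htu⟩ : ∃ t : ℝ, 0 < t ∧ u < t * f x := by
      refine ⟨(u + 1) / f x, by positivity, ?_⟩
      rw [div_mul_cancel₀ _ (ne_of_gt hpos)]; linarith
    have := hfu (t • x) (hcone t ht x hx)
    rw [f.map_smul, smul_eq_mul] at this
    linarith
  set w : Fin k → ℝ := fun i => -(f (fun j => if i = j then 1 else 0)) with hw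
  have hwpair : ∀ x : Fin k → ℝ, ∑ i, x i * w i = -(f x) := by
    intro x
    rw [clm_eq_sum f x, ← Finset.sum_neg_distrib]
    exact Finset.sum_congr rfl fun i _ => by simp [hw]
  have hwdual : w ∈ dualCone Λ := by
    intro x hx
    rw [hwpair x]
    linarith [hfle x hx]
  have h2 : (0:ℝ) ≤ ∑ i, v i * w i := by
    simpa [mul_comm] using hv w hwdual
  rw [hwpair v] at h2
  linarith

lemma dualCone_interior_nonempty {k : ℕ} {Λ : Set (Fin k → ℝ)} (hcl : IsClosed Λ)
    (hconv : Convex ℝ Λ) (hcone : ∀ c : ℝ, 0 < c → ∀ x ∈ Λ, c • x ∈ Λ)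
    (hsal : Λ ∩ (-Λ) = {0}) : (interior (dualCone Λ)).Nonempty := by
  have h0 : (0:Fin k → ℝ) ∈ Λ := by
    have : (0:Fin k → ℝ) ∈ Λ ∩ (-Λ) := by rw [hsal]; rfl
    exact this.1
  have hconvD : Convex ℝ (dualCone Λ) := by
    intro y hy z hz a b ha hb hab x hx
    have hy' := hy x hx; have hz' := hz x hx
    have : 0 ≤ a * ∑ i, x i * y i + b * ∑ i, x i * z i :=
      add_nonneg (mul_nonneg ha hy') (mul_nonneg hb hz')
    calc (0:ℝ) ≤ a * ∑ i, x i * y i + b * ∑ i, x i * z i := this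
    _ = ∑ i, x i * (a • y + b • z) i := by
        rw [Finset.mul_sum, Finset.mul_sum, ← Finset.sum_add_distrib]
        exact Finset.sum_congr rfl fun i _ => by simp; ring
  by_contra hni
  rw [Set.not_nonempty_iff_eq_empty, ← Set.not_nonempty_iff_eq_empty] at hni
  have hspan : ¬ affineSpan ℝ (dualCone Λ) = ⊤ := by
    intro h
    exact hni (hconvD.interior_nonempty_iff_affineSpan_eq_top.mpr h)
  -- span as submodule is proper
  have hsub : Submodule.span ℝ (dualCone Λ) < ⊤ := by
    rcases lt_or_eq_of_le (le_top : Submodule.span ℝ (dualCone Λ) ≤ ⊤) with h | h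
    · exact h
    · exfalso
      apply hspan
      have h0d : (0:Fin k → ℝ) ∈ dualCone Λ := by intro x _; simp
      have hco := affineSpan_insert_zero (k := ℝ) (dualCone Λ)
      rw [Set.insert_eq_of_mem h0d] at hco
      rw [eq_top_iff]
      intro x _
      have hx : x ∈ Submodule.span ℝ (dualCone Λ) := h ▸ Submodule.mem_top
      have : x ∈ (affineSpan ℝ (dualCone Λ) : Set (Fin k → ℝ)) := by rw [hco]; exact hx
      exact this
  obtain ⟨g, hg0, hgbot⟩ := Submodule.exists_dual_map_eq_bot_of_lt_top hsub inferInstance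
  -- g vanishes on dualCone Λ
  have hgz : ∀ y ∈ dualCone Λ, g y = 0 := by
    intro y hy
    have : g y ∈ (Submodule.span ℝ (dualCone Λ)).map g := by
      exact Submodule.mem_map_of_mem (Submodule.subset_span hy)
    rw [hgbot] at this
    simpa using this
  set w : Fin k → ℝ := fun i => g (fun j => if i = j then 1 else 0) with hw
  have hwpair : ∀ x : Fin k → ℝ, ∑ i, x i * w i = g x := by
    intro x
    conv_rhs => rw [pi_eq_sum_univ x, map_sum]
    exact Finset.sum_congr rfl fun i _ => by simp [hw, smul_eq_mul]
  have hwd : w ∈ dualCone (dualCone Λ) := by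
    intro y hy; rw [hwpair y, hgz y hy]
  have hwd' : -w ∈ dualCone (dualCone Λ) := by
    intro y hy
    have : ∑ i, y i * (-w) i = -∑ i, y i * w i := by
      rw [← Finset.sum_neg_distrib]; exact Finset.sum_congr rfl fun i _ => by simp
    rw [this, hwpair y, hgz y hy]; simp
  have hwΛ : w ∈ Λ := bipolar hcl hconv hcone h0 hwd
  have hwΛ' : -w ∈ Λ := bipolar hcl hconv hcone h0 hwd'
  have : w ∈ Λ ∩ (-Λ) := ⟨hwΛ, by simpa using hwΛ'⟩
  rw [hsal] at this
  simp only [Set.mem_singleton_iff] at this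
  apply hg0
  apply LinearMap.ext
  intro x
  rw [← hwpair x, this]
  simp

lemma interior_cone_smul {k : ℕ} {Λ : Set (Fin k → ℝ)}
    (hcone : ∀ c : ℝ, 0 < c → ∀ x ∈ Λ, c • x ∈ Λ) {c : ℝ} (hc : 0 < c)
    {a : Fin k → ℝ} (ha : a ∈ interior Λ) : c • a ∈ interior Λ := by
  set e := Homeomorph.smulOfNeZero (G₀ := ℝ) (α := Fin k → ℝ) c (ne_of_gt hc) with he
  have himg : e '' interior Λ = interior (e '' Λ) := Homeomorph.image_interior e Λ
  have hsub : e '' Λ ⊆ Λ := by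
    rintro _ ⟨x, hx, rfl⟩
    show c • x ∈ Λ
    exact hcone c hc x hx
  have hmem : c • a ∈ interior (e '' Λ) := by
    rw [← himg]
    exact ⟨a, ha, rfl⟩
  exact interior_mono hsub hmem

lemma supporting {k : ℕ} {Λ : Set (Fin k → ℝ)} (hcl : IsClosed Λ) (hconv : Convex ℝ Λ)
    (hcone : ∀ c : ℝ, 0 < c → ∀ x ∈ Λ, c • x ∈ Λ) (hfull : (interior Λ).Nonempty)
    {b : Fin k → ℝ} (hb : b ∈ frontier Λ) :
    ∃ y₀ : Fin k → ℝ, y₀ ∈ dualCone Λ ∧ (∑ i, b i * y₀ i) = 0 ∧ y₀ ≠ 0 := by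
  have hbΛ : b ∈ Λ := hcl.closure_eq ▸ frontier_subset_closure hb
  obtain ⟨f, hf⟩ :=
    geometric_hahn_banach_open_point (hconv.interior) isOpen_interior hb.2
  obtain ⟨a₀, ha₀⟩ := hfull
  have h1 : ∀ t : ℝ, 0 < t → t * f a₀ < f b := fun t ht => by
    have := hf _ (interior_cone_smul hcone ht ha₀)
    rwa [f.map_smul, smul_eq_mul] at this
  have hfb0 : (0:ℝ) ≤ f b := by
    have ht : Tendsto (fun t : ℝ => t * f a₀) (nhdsWithin 0 (Set.Ioi 0)) (nhds 0) := by
      have h := (continuous_id.mul (continuous_const (y := f a₀))).tendsto (0:ℝ)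
      replace h : Tendsto (fun t : ℝ => t * f a₀) (nhds 0) (nhds 0) := by
        simpa using (continuous_mul_right (f a₀)).tendsto (0:ℝ)
      exact h.mono_left nhdsWithin_le_nhds
    exact le_of_tendsto ht (eventually_nhdsWithin_of_forall fun t ht' => (h1 t ht').le)
  have hfle : ∀ x ∈ Λ, f x ≤ f b := by
    intro x hx
    have h2 : ∀ t : ℝ, 0 < t → t ≤ 1 → f ((1 - t) • x + t • a₀) < f b := by
      intro t ht ht1
      exact hf _ (hconv.combo_closure_interior_mem_interior (subset_closure hx) ha₀
        (by linarith) ht (by ring))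
    have hc : Continuous fun t : ℝ => f ((1 - t) • x + t • a₀) := by
      apply f.continuous.comp
      continuity
    have hcont : Tendsto (fun t : ℝ => f ((1 - t) • x + t • a₀))
        (nhdsWithin 0 (Set.Ioi 0)) (nhds (f x)) := by
      have h := hc.tendsto 0
      simp only [sub_zero, one_smul, zero_smul, add_zero] at h
      exact h.mono_left nhdsWithin_le_nhds
    refine le_of_tendsto hcont ?_
    have hev : ∀ᶠ t in nhdsWithin (0:ℝ) (Set.Ioi 0), t < 1 :=
      eventually_nhdsWithin_of_eventually_nhds (eventually_lt_nhds one_pos)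
    filter_upwards [hev, eventually_mem_nhdsWithin] with t ht1 ht0
    exact (h2 t ht0 ht1.le).le
  have hfneg : ∀ x ∈ Λ, f x ≤ 0 := by
    intro x hx
    by_contra h
    push_neg at h
    have h3 := hfle _ (hcone ((f b + 1)/f x) (div_pos (by linarith) h) x hx)
    rw [f.map_smul, smul_eq_mul, div_mul_cancel₀ _ (ne_of_gt h)] at h3
    linarith
  have hfb : f b = 0 := le_antisymm (hfneg b hbΛ) hfb0
  refine ⟨fun i => -(f (fun j => if i = j then 1 else 0)), ?_, ?_, ?_⟩
  · intro x hx
    have : ∑ i, x i * -(f fun j => if i = j then 1 else 0) = -(f x) := by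
      rw [clm_eq_sum f x, ← Finset.sum_neg_distrib]
      exact Finset.sum_congr rfl fun i _ => by ring
    rw [this]
    linarith [hfneg x hx]
  · have : ∑ i, b i * -(f fun j => if i = j then 1 else 0) = -(f b) := by
      rw [clm_eq_sum f b, ← Finset.sum_neg_distrib]
      exact Finset.sum_congr rfl fun i _ => by ring
    rw [this, hfb, neg_zero]
  · intro hz
    have ha0 : f a₀ < 0 := by
      have := hf a₀ ha₀
      linarith
    have : ∑ i, a₀ i * -(f fun j => if i = j then 1 else 0) = -(f a₀) := by
      rw [clm_eq_sum f a₀, ← Finset.sum_neg_distrib]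
      exact Finset.sum_congr rfl fun i _ => by ring
    have h4 : (∑ i, a₀ i * -(f fun j => if i = j then 1 else 0)) = 0 :=
      Finset.sum_eq_zero fun i _ => by
        have hzi := congrFun hz i
        simp only [Pi.zero_apply] at hzi
        rw [hzi, mul_zero]
    rw [h4] at this
    linarith

lemma integrable_exp_neg_abs {c : ℝ} (hc : 0 < c) :
    Integrable (fun t : ℝ => Real.exp (-c * |t|)) := by
  have h1 : IntegrableOn (fun t : ℝ => Real.exp (-c * |t|)) (Set.Ici 0) := by
    rw [integrableOn_Ici_iff_integrableOn_Ioi]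
    refine (exp_neg_integrableOn_Ioi 0 hc).congr_fun ?_ measurableSet_Ioi
    intro t ht
    show Real.exp (-c * t) = Real.exp (-c * |t|)
    rw [abs_of_pos (Set.mem_Ioi.mp ht)]
  have h2 : IntegrableOn (fun t : ℝ => Real.exp (-c * |t|)) (Set.Iic 0) := by
    rw [← integrable_indicator_iff measurableSet_Iic]
    have heq : (Set.Iic (0:ℝ)).indicator (fun t => Real.exp (-c * |t|)) =
        fun t => (Set.Ici (0:ℝ)).indicator (fun u => Real.exp (-c * |u|)) (-t) := by
      funext t
      by_cases ht : t ≤ 0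
      · rw [Set.indicator_of_mem (Set.mem_Iic.mpr ht), Set.indicator_of_mem
          (Set.mem_Ici.mpr (by linarith : (0:ℝ) ≤ -t)), abs_neg]
      · rw [Set.indicator_of_notMem (by simpa using ht), Set.indicator_of_notMem
          (by simp only [Set.mem_Ici]; push_neg at ht ⊢; linarith)]
    rw [heq]
    have := (integrable_indicator_iff measurableSet_Ici).mpr h1
    exact this.comp_neg
  have := h2.union h1
  rwa [Set.Iic_union_Ici, integrableOn_univ] at this

lemma decay_of_mem_interior {k : ℕ} {Λ : Set (Fin k → ℝ)} {s : Fin k → ℝ}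
    (hs : s ∈ interior Λ) :
    ∃ c : ℝ, 0 < c ∧ ∀ y ∈ dualCone Λ, c * ∑ i, |y i| ≤ ∑ i, s i * y i := by
  obtain ⟨ε, hε, hball⟩ := Metric.mem_nhds_iff.mp (mem_interior_iff_mem_nhds.mp hs)
  have key : ∀ y ∈ dualCone Λ, ∀ i, (ε/2) * |y i| ≤ ∑ j, s j * y j := by
    intro y hy i
    set a : ℝ := if 0 ≤ y i then ε/2 else -(ε/2) with ha
    have haabs : |a| = ε/2 := by
      rw [ha]
      split
      · exact abs_of_pos (by linarith)
      · rw [abs_neg]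
        exact abs_of_pos (by linarith)
    have hdist : dist (s - Pi.single i a) s < ε := by
      rw [dist_eq_norm, sub_sub_cancel_left, norm_neg, Pi.norm_single, Real.norm_eq_abs, haabs]
      linarith
    have hx : s - Pi.single i a ∈ Λ := hball (Metric.mem_ball.mpr hdist)
    have h0 := hy _ hx
    have hsingle : ∑ j, (Pi.single i a : Fin k → ℝ) j * y j = a * y i := by
      rw [Finset.sum_eq_single i]
      · rw [Pi.single_eq_same]
      · intro j _ hj
        rw [Pi.single_eq_of_ne hj, zero_mul]
      · intro h; exact absurd (Finset.mem_univ i) h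
    have hexp : ∑ j, (s - (Pi.single i a : Fin k → ℝ)) j * y j
        = (∑ j, s j * y j) - a * y i := by
      rw [← hsingle, ← Finset.sum_sub_distrib]
      exact Finset.sum_congr rfl fun j _ => by
        simp only [Pi.sub_apply]
        ring
    rw [hexp] at h0
    have hay : a * y i = (ε/2) * |y i| := by
      rw [ha]
      by_cases hyi : 0 ≤ y i
      · rw [if_pos hyi, abs_of_nonneg hyi]
      · rw [if_neg hyi, abs_of_neg (lt_of_not_ge hyi)]; ring
    linarith [hay ▸ h0]
  refine ⟨(ε/2)/(k+1), by positivity, fun y hy => ?_⟩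
  have hsy : 0 ≤ ∑ i, s i * y i := hy s (interior_subset hs)
  have hsum : (ε/2) * ∑ i, |y i| ≤ (k : ℝ) * ∑ i, s i * y i := by
    calc (ε/2) * ∑ i, |y i| = ∑ i, (ε/2) * |y i| := Finset.mul_sum _ _ _
    _ ≤ ∑ _i : Fin k, ∑ j, s j * y j := Finset.sum_le_sum fun i _ => key y hy i
    _ = (k : ℝ) * ∑ j, s j * y j := by
        rw [Finset.sum_const, Finset.card_univ, Fintype.card_fin, nsmul_eq_mul]
  rw [div_mul_eq_mul_div, div_le_iff₀ (by positivity)]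
  nlinarith [hsy, hsum]

lemma integrableOn_exp_dualCone {k : ℕ} (Λ : Set (Fin k → ℝ)) {s : Fin k → ℝ} {c : ℝ}
    (hc : 0 < c) (hdecay : ∀ y ∈ dualCone Λ, c * ∑ i, |y i| ≤ ∑ i, s i * y i) :
    IntegrableOn (fun y : Fin k → ℝ => Real.exp (-∑ i, s i * y i)) (dualCone Λ) := by
  have hg : Integrable (fun y : Fin k → ℝ => ∏ i, Real.exp (-c * |y i|)) :=
    Integrable.fintype_prod (f := fun (_ : Fin k) (t : ℝ) => Real.exp (-c * |t|))
      fun _ => integrable_exp_neg_abs hc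
  refine Integrable.mono' (hg.restrict (s := dualCone Λ)) ?_ ?_
  · exact (Real.continuous_exp.comp (contPair s).neg).aestronglyMeasurable
  · refine (ae_restrict_iff' (dualCone_isClosed Λ).measurableSet).mpr (ae_of_all _ fun y hy => ?_)
    rw [Real.norm_eq_abs, abs_of_pos (Real.exp_pos _)]
    have hprod : ∏ i, Real.exp (-c * |y i|) = Real.exp (∑ i, -c * |y i|) :=
      (Real.exp_sum _ _).symm
    rw [hprod]
    apply Real.exp_le_exp.mpr
    have h1 := hdecay y hy
    have h2 : ∑ i, -c * |y i| = -(c * ∑ i, |y i|) := by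
      rw [Finset.mul_sum, ← Finset.sum_neg_distrib]
      exact Finset.sum_congr rfl fun i _ => by ring
    rw [h2]
    linarith

/-- as `s` tends (within the interior of `Λ`) to a boundary point
of `Λ`, `X_Λ(s) → ∞`. -/
theorem XFunction_tendsto_atTop_on_boundary (k : ℕ) (Λ : Set (Fin k → ℝ))
    (hcl : IsClosed Λ) (hconv : Convex ℝ Λ)
    (hcone : ∀ c : ℝ, 0 < c → ∀ x ∈ Λ, c • x ∈ Λ)
    (hsal : Λ ∩ (-Λ) = {0}) (hfull : (interior Λ).Nonempty)
    (b : Fin k → ℝ) (hb : b ∈ frontier Λ) :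
    Tendsto (XFunR Λ) (nhdsWithin b (interior Λ)) atTop := by
  obtain ⟨y₀, hy₀d, hy₀b, hy₀ne⟩ := supporting hcl hconv hcone hfull hb
  obtain ⟨u₀, hu₀⟩ := dualCone_interior_nonempty hcl hconv hcone hsal
  obtain ⟨ε, hε, hball⟩ := Metric.mem_nhds_iff.mp (mem_interior_iff_mem_nhds.mp hu₀)
  set r : ℝ := ‖y₀‖ with hrdef
  have hr : 0 < r := norm_pos_iff.mpr hy₀ne
  set C : ℝ := (∑ i, |b i|) * (‖u₀‖ + ε) with hC
  set cen : ℕ → (Fin k → ℝ) := fun n => u₀ + ((n : ℝ) * (3 * ε / r)) • y₀ with hcen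
  -- key pointwise facts about the balls
  have hkey : ∀ n : ℕ, ∀ y ∈ Metric.ball (cen n) ε,
      y ∈ dualCone Λ ∧ (∑ i, b i * y i) ≤ C := by
    intro n y hy
    set τ : ℝ := (n : ℝ) * (3 * ε / r) with hτ
    have hτ0 : 0 ≤ τ := by positivity
    set v : Fin k → ℝ := y - τ • y₀ with hv
    have hvb : v ∈ Metric.ball u₀ ε := by
      rw [Metric.mem_ball, dist_eq_norm]
      have : v - u₀ = y - cen n := by rw [hv, hcen, hτ]; beta_reduce; abel
      rw [this, ← dist_eq_norm]
      exact hy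
    have hvd : v ∈ dualCone Λ := hball hvb
    have hyd : y ∈ dualCone Λ := by
      have : v + τ • y₀ = y := by rw [hv]; abel
      rw [← this]
      exact dualCone_add hvd (dualCone_smul hτ0 hy₀d)
    refine ⟨hyd, ?_⟩
    have hsplit : ∑ i, b i * y i = (∑ i, b i * v i) + τ * ∑ i, b i * y₀ i := by
      rw [Finset.mul_sum, ← Finset.sum_add_distrib]
      refine Finset.sum_congr rfl fun i _ => ?_
      have : y i = v i + τ * y₀ i := by simp [hv]
      rw [this]; ring
    rw [hsplit, hy₀b, mul_zero, add_zero]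
    have hvnorm : ‖v‖ ≤ ‖u₀‖ + ε := by
      have := (Metric.mem_ball.mp hvb).le
      rw [dist_eq_norm] at this
      calc ‖v‖ = ‖u₀ + (v - u₀)‖ := by rw [add_sub_cancel]
      _ ≤ ‖u₀‖ + ‖v - u₀‖ := norm_add_le _ _
      _ ≤ ‖u₀‖ + ε := by linarith
    calc ∑ i, b i * v i ≤ ∑ i, |b i| * (‖u₀‖ + ε) := by
          refine Finset.sum_le_sum fun i _ => ?_
          calc b i * v i ≤ |b i * v i| := le_abs_self _
          _ = |b i| * |v i| := abs_mul _ _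
          _ ≤ |b i| * (‖u₀‖ + ε) := by
              refine mul_le_mul_of_nonneg_left ?_ (abs_nonneg _)
              calc |v i| = ‖v i‖ := rfl
              _ ≤ ‖v‖ := norm_le_pi_norm v i
              _ ≤ ‖u₀‖ + ε := hvnorm
    _ = C := by rw [hC, ← Finset.sum_mul]
  -- volume of one ball
  set v₀ := volume (Metric.ball (0 : Fin k → ℝ) ε) with hv₀
  have hv₀pos : 0 < v₀ := Metric.measure_ball_pos volume 0 hε
  have hv₀top : v₀ < ⊤ := measure_ball_lt_top
  rw [tendsto_atTop]
  intro M
  set d : ℝ := Real.exp (-(C + 1)) * v₀.toReal with hd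
  have hdpos : 0 < d := by
    apply mul_pos (Real.exp_pos _)
    exact ENNReal.toReal_pos (ne_of_gt hv₀pos) (ne_of_lt hv₀top)
  set N : ℕ := ⌈M / d⌉₊ + 1 with hN
  have hMN : M ≤ (N : ℝ) * d := by
    have h1 : M / d ≤ (N : ℝ) := by
      calc M / d ≤ (⌈M / d⌉₊ : ℝ) := Nat.le_ceil _
      _ ≤ (N : ℝ) := by exact_mod_cast Nat.le_succ _
    calc M = M / d * d := by field_simp
    _ ≤ (N : ℝ) * d := mul_le_mul_of_nonneg_right h1 hdpos.le
  -- the union of balls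
  set A : Set (Fin k → ℝ) := ⋃ n ∈ Finset.range N, Metric.ball (cen n) ε with hA
  have hAmeas : MeasurableSet A :=
    (Finset.range N).measurableSet_biUnion fun n _ => Metric.isOpen_ball.measurableSet
  have hAsub : A ⊆ dualCone Λ := by
    intro y hy
    simp only [hA, Set.mem_iUnion] at hy
    obtain ⟨n, _, hn⟩ := hy
    exact (hkey n y hn).1
  have hdisj : (↑(Finset.range N) : Set ℕ).PairwiseDisjoint
      (fun n => Metric.ball (cen n) ε) := by
    intro m _ n _ hmn
    apply Metric.ball_disjoint_ball
    have hdist : dist (cen m) (cen n) = |(m : ℝ) - n| * (3 * ε) := by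
      rw [dist_eq_norm, hcen]
      have : (u₀ + ((m : ℝ) * (3 * ε / r)) • y₀) - (u₀ + ((n : ℝ) * (3 * ε / r)) • y₀)
          = (((m : ℝ) - n) * (3 * ε / r)) • y₀ := by
        rw [sub_mul, sub_smul]
        module
      rw [this, norm_smul, Real.norm_eq_abs, abs_mul, ← hrdef]
      rw [abs_of_pos (by positivity : (0:ℝ) < 3 * ε / r)]
      field_simp
    have hge : (1 : ℝ) ≤ |(m : ℝ) - n| := by
      have h2 : (1 : ℤ) ≤ |(m : ℤ) - n| := by
        apply Int.one_le_abs
        have : (m:ℤ) ≠ n := by exact_mod_cast hmn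
        exact sub_ne_zero.mpr this
      calc (1:ℝ) ≤ (|(m : ℤ) - n| : ℤ) := by exact_mod_cast h2
      _ = |(m : ℝ) - n| := by push_cast; rfl
    rw [hdist]
    nlinarith
  have hvolA : volume A = (N : ℕ) • v₀ := by
    rw [hA, measure_biUnion_finset hdisj fun n _ => Metric.isOpen_ball.measurableSet]
    rw [Finset.sum_congr rfl fun n _ => Measure.addHaar_ball_center volume (cen n) ε]
    simp [hv₀]
  set R : ℝ := ‖u₀‖ + (N:ℝ) * (3*ε/r) * r + ε with hR
  have hRpos : 0 < R := by positivity
  have hAbound : ∀ y ∈ A, ∑ i, |y i| ≤ (k:ℝ) * R := by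
    intro y hy
    simp only [hA, Set.mem_iUnion] at hy
    obtain ⟨n, hnN, hn⟩ := hy
    have hnN' : (n:ℝ) ≤ (N:ℝ) := by
      exact_mod_cast (Finset.mem_range.mp hnN).le
    have hynorm : ‖y‖ ≤ R := by
      have h1 : dist y (cen n) < ε := Metric.mem_ball.mp hn
      have h2 : ‖cen n‖ ≤ ‖u₀‖ + (n:ℝ) * (3*ε/r) * r := by
        rw [hcen]
        calc ‖u₀ + ((n:ℝ)*(3*ε/r)) • y₀‖ ≤ ‖u₀‖ + ‖((n:ℝ)*(3*ε/r)) • y₀‖ := norm_add_le _ _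
        _ = ‖u₀‖ + (n:ℝ)*(3*ε/r) * r := by
            rw [norm_smul, Real.norm_eq_abs, abs_of_nonneg (by positivity), hrdef]
      have h3 : ‖y - cen n‖ < ε := by rwa [← dist_eq_norm]
      have h4 : (n:ℝ)*(3*ε/r)*r ≤ (N:ℝ)*(3*ε/r)*r := by
        have : (0:ℝ) ≤ (3*ε/r)*r := by positivity
        nlinarith
      calc ‖y‖ = ‖cen n + (y - cen n)‖ := by rw [add_sub_cancel]
      _ ≤ ‖cen n‖ + ‖y - cen n‖ := norm_add_le _ _
      _ ≤ (‖u₀‖ + (n:ℝ)*(3*ε/r)*r) + ε := by linarith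
      _ ≤ R := by rw [hR]; linarith
    calc ∑ i, |y i| ≤ ∑ _i : Fin k, ‖y‖ := Finset.sum_le_sum fun i _ => norm_le_pi_norm y i
    _ = (k:ℝ) * ‖y‖ := by rw [Finset.sum_const, Finset.card_univ, Fintype.card_fin, nsmul_eq_mul]
    _ ≤ (k:ℝ) * R := mul_le_mul_of_nonneg_left hynorm (Nat.cast_nonneg k)
  set δ : ℝ := 1 / ((k:ℝ) * R + 1) with hδ
  have hkR : (0:ℝ) ≤ (k:ℝ) * R := by positivity
  have hδpos : 0 < δ := by positivity
  have hev1 : ∀ᶠ s' in nhdsWithin b (interior Λ), s' ∈ interior Λ := eventually_mem_nhdsWithin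
  have hev2 : ∀ᶠ s' in nhdsWithin b (interior Λ), dist s' b < δ := by
    apply eventually_nhdsWithin_of_eventually_nhds
    refine Metric.eventually_nhds_iff.mpr ⟨δ, hδpos, ?_⟩
    intro y h
    exact h
  filter_upwards [hev1, hev2] with s hsint hsdist
  obtain ⟨c, hc, hdecay⟩ := decay_of_mem_interior hsint
  have hint := integrableOn_exp_dualCone Λ hc hdecay
  have hexp_lb : ∀ y ∈ A, Real.exp (-(C+1)) ≤ Real.exp (-∑ i, s i * y i) := by
    intro y hy
    have hyA := hy
    simp only [hA, Set.mem_iUnion] at hy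
    obtain ⟨n, hnN, hn⟩ := hy
    apply Real.exp_le_exp.mpr
    rw [neg_le_neg_iff]
    have hby := (hkey n y hn).2
    have hdiff : ∑ i, s i * y i - ∑ i, b i * y i ≤ 1 := by
      have h1 : ∑ i, s i * y i - ∑ i, b i * y i = ∑ i, (s i - b i) * y i := by
        rw [← Finset.sum_sub_distrib]
        exact Finset.sum_congr rfl fun i _ => by ring
      rw [h1]
      have h2 : ∀ i, (s i - b i) * y i ≤ ‖s - b‖ * |y i| := by
        intro i
        calc (s i - b i) * y i ≤ |(s i - b i) * y i| := le_abs_self _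
        _ = |(s - b) i| * |y i| := by rw [abs_mul]; rfl
        _ ≤ ‖s - b‖ * |y i| :=
            mul_le_mul_of_nonneg_right (norm_le_pi_norm (s - b) i) (abs_nonneg _)
      calc ∑ i, (s i - b i) * y i ≤ ∑ i, ‖s - b‖ * |y i| := Finset.sum_le_sum fun i _ => h2 i
      _ = ‖s - b‖ * ∑ i, |y i| := (Finset.mul_sum _ _ _).symm
      _ ≤ δ * ((k:ℝ) * R) := by
          have hnb : ‖s - b‖ ≤ δ := by
            rw [← dist_eq_norm]
            exact hsdist.le
          have hsum0 : (0:ℝ) ≤ ∑ i, |y i| := Finset.sum_nonneg fun i _ => abs_nonneg _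
          exact mul_le_mul hnb (hAbound y hyA) hsum0 hδpos.le
      _ ≤ 1 := by
          rw [hδ, div_mul_eq_mul_div, one_mul, div_le_one (by positivity)]
          linarith
    linarith
  have hvolA_toReal : (volume A).toReal = (N:ℝ) * v₀.toReal := by
    rw [hvolA, nsmul_eq_mul, ENNReal.toReal_mul]
    simp
  have hAfin : volume A ≠ ⊤ := by
    rw [hvolA, nsmul_eq_mul]
    exact (ENNReal.mul_lt_top (by simp) hv₀top).ne
  have step2 : Real.exp (-(C+1)) * (volume A).toReal ≤ ∫ y in A, Real.exp (-∑ i, s i * y i) :=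
    by
      have := setIntegral_ge_of_const_le_real hAmeas hAfin hexp_lb (hint.mono_set hAsub)
      exact this
  have step1 : (∫ y in A, Real.exp (-∑ i, s i * y i))
      ≤ ∫ y in dualCone Λ, Real.exp (-∑ i, s i * y i) :=
    setIntegral_mono_set hint (ae_of_all _ fun y => (Real.exp_pos _).le)
      (HasSubset.Subset.eventuallyLE hAsub)
  show M ≤ ∫ y in dualCone Λ, Real.exp (-∑ i, s i * y i)
  calc M ≤ (N:ℝ) * d := hMN
  _ = Real.exp (-(C+1)) * ((N:ℝ) * v₀.toReal) := by rw [hd]; ring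
  _ = Real.exp (-(C+1)) * (volume A).toReal := by rw [hvolA_toReal]
  _ ≤ ∫ y in dualCone Λ, Real.exp (-∑ i, s i * y i) := le_trans step2 step1
end

section
/- Let Σ be a complete fan of cones in a d-dimensional real vector space N_ℝ with dual space M_ℝ, with each maximal cone σ ∈ Σ(d) simplicial with primitive generators {e_j}. Then for s with all coordinates s_j having positive real part and any m ∈ M_ℝ, ∫_{N_ℝ} e^{-φ_s(x) - i⟨x,m⟩} dx = Σ_{σ ∈ Σ(d)} ∏_{e_j ∈ σ} (s_j + i⟨e_j, m⟩)^{-1}, where φ_s is the Σ-piecewise linear function with φ_s(e_j) = s_j, provided each maximal cone is generated by a basis of the lattice. -/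
open MeasureTheory Matrix

/-- The closed cone spanned by the (real images of the) integral generators
`gen a 0, …, gen a (d-1)` of the maximal cone indexed by `a`. -/
def maxCone {d N : ℕ} (gen : Fin N → Fin d → (Fin d → ℤ)) (a : Fin N) :
    Set (Fin d → ℝ) :=
  {x | ∃ t : Fin d → ℝ, (∀ j, 0 ≤ t j) ∧ x = ∑ j, t j • fun i => ((gen a j i : ℝ))}

lemma aux_integrableOn_cexp {c : ℂ} (hc : 0 < c.re) :
    IntegrableOn (fun t : ℝ => Complex.exp (-(c * t))) (Set.Ici 0) := by
  rw [integrableOn_Ici_iff_integrableOn_Ioi]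
  apply Integrable.mono' (g := fun t : ℝ => Real.exp (-c.re * t))
      (exp_neg_integrableOn_Ioi 0 hc)
  · exact (Complex.continuous_exp.comp
      ((continuous_const.mul Complex.continuous_ofReal).neg)).aestronglyMeasurable
  · filter_upwards with t
    simp [Complex.norm_exp, Complex.mul_re]

lemma aux_integral_cexp {c : ℂ} (hc : 0 < c.re) :
    ∫ t : ℝ in Set.Ioi 0, Complex.exp (-(c * t)) = c⁻¹ := by
  have hc0 : c ≠ 0 := fun h => by simp [h] at hc
  have hderiv : ∀ x ∈ Set.Ici (0 : ℝ),
      HasDerivAt (fun t : ℝ => -c⁻¹ * Complex.exp (-(c * t)))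
        (Complex.exp (-(c * x))) x := by
    intro x _
    have h1 : HasDerivAt (fun z : ℂ => -c⁻¹ * Complex.exp (-(c * z)))
        (Complex.exp (-(c * (x : ℂ)))) (x : ℂ) := by
      have h2 := (((hasDerivAt_id (x : ℂ)).const_mul c).neg).cexp.const_mul (-c⁻¹)
      refine h2.congr_deriv ?_
      simp only [Pi.neg_apply, id, mul_one]
      field_simp
    exact h1.comp_ofReal
  have htend : Filter.Tendsto (fun t : ℝ => -c⁻¹ * Complex.exp (-(c * t)))
      Filter.atTop (nhds 0) := by
    have : Filter.Tendsto (fun t : ℝ => Complex.exp (-(c * t))) Filter.atTop (nhds 0) := by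
      refine tendsto_zero_iff_norm_tendsto_zero.mpr ?_
      have hnorm : ∀ t : ℝ, ‖Complex.exp (-(c * t))‖ = Real.exp (-(c.re * t)) := by
        intro t; simp [Complex.norm_exp, Complex.mul_re]
      simp_rw [hnorm]
      exact Real.tendsto_exp_atBot.comp
        (Filter.tendsto_neg_atTop_atBot.comp
          (Filter.Tendsto.const_mul_atTop hc Filter.tendsto_id))
    simpa using this.const_mul (-c⁻¹)
  have h := integral_Ioi_of_hasDerivAt_of_tendsto' hderiv
    ((aux_integrableOn_cexp hc).mono_set Set.Ioi_subset_Ici_self) htend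
  rw [h]
  simp

/-- for a complete regular fan `Σ` in `ℝ^d` (each maximal cone generated
by a lattice basis), `s` with `Re(s_j) > 0` on each primitive generator, and any
`m ∈ M_ℝ`, the Fourier transform of `e^{-φ_s}` is
`∫_{N_ℝ} e^{-φ_s(x) - i⟨x,m⟩} dx = Σ_{σ ∈ Σ(d)} ∏_{e_j ∈ σ} (s_j + i⟨e_j,m⟩)⁻¹`. -/
theorem fan_fourier_transform (d N : ℕ) (hd : 0 < d)
    (gen : Fin N → Fin d → (Fin d → ℤ))
    (hbasis : ∀ a, IsUnit (Matrix.det (Matrix.of fun j i => gen a j i)))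
    (hcover : (⋃ a, maxCone gen a) = Set.univ)
    (hdisj : ∀ a b, a ≠ b → volume (maxCone gen a ∩ maxCone gen b) = 0)
    (sval : (Fin d → ℤ) → ℂ) (hre : ∀ a j, 0 < (sval (gen a j)).re)
    (φ : (Fin d → ℝ) → ℂ)
    (hφ : ∀ a (t : Fin d → ℝ), (∀ j, 0 ≤ t j) →
      φ (∑ j, t j • fun i => ((gen a j i : ℝ))) = ∑ j, (t j : ℂ) * sval (gen a j))
    (m : Fin d → ℝ) :
    (∫ x : Fin d → ℝ, Complex.exp (-φ x - Complex.I * ((∑ i, x i * m i : ℝ) : ℂ)))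
      = ∑ a, ∏ j, (sval (gen a j) + Complex.I * ((∑ i, (gen a j i : ℝ) * m i : ℝ) : ℂ))⁻¹ := by
  classical
  -- matrices
  set A : Fin N → Matrix (Fin d) (Fin d) ℝ :=
    fun a => Matrix.of fun j i => ((gen a j i : ℝ)) with hA
  have hdetA : ∀ a, |(A a).det| = 1 := by
    intro a
    have h1 : A a = (Int.castRingHom ℝ).mapMatrix (Matrix.of fun j i => gen a j i) := by
      ext j i; simp [hA]
    have h2 : (A a).det = (((Matrix.of fun j i => gen a j i).det : ℤ) : ℝ) := by
      rw [h1, ← RingHom.map_det]; rfl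
    rcases Int.isUnit_iff.mp (hbasis a) with h | h <;> simp [h2, h]
  have hdetA0 : ∀ a, (A a).det ≠ 0 := by
    intro a h
    have := hdetA a
    rw [h] at this; simp at this
  have hunitT : ∀ a, IsUnit ((A a)ᵀ).det := by
    intro a
    rw [Matrix.det_transpose]
    exact isUnit_iff_ne_zero.mpr (hdetA0 a)
  -- the linear change of variables and its basic properties
  set T : Fin N → ((Fin d → ℝ) →L[ℝ] (Fin d → ℝ)) :=
    fun a => LinearMap.toContinuousLinearMap (Matrix.toLin' (A a)ᵀ) with hT
  have hTapp : ∀ a t, T a t = (A a)ᵀ.mulVec t := by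
    intro a t
    simp [hT, Matrix.toLin'_apply]
  have hsum_eq : ∀ a (t : Fin d → ℝ),
      (∑ j, t j • fun i => ((gen a j i : ℝ))) = (A a)ᵀ.mulVec t := by
    intro a t
    funext i
    rw [Finset.sum_apply]
    simp [Matrix.mulVec, dotProduct, Matrix.transpose_apply, hA, mul_comm]
  have hTdet : ∀ a, |(T a).det| = 1 := by
    intro a
    have : (T a).det = ((A a)ᵀ).det := by
      simp only [hT, ContinuousLinearMap.det]
      rw [LinearMap.coe_toContinuousLinearMap]
      exact LinearMap.det_toLin' _
    rw [this, Matrix.det_transpose]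
    exact hdetA a
  have hTinj : ∀ a, Function.Injective (T a) := by
    intro a
    have : Function.Injective ((A a)ᵀ).mulVec :=
      Matrix.mulVec_injective_iff_isUnit.mpr
        ((Matrix.isUnit_iff_isUnit_det _).mpr (hunitT a))
    intro x y h
    apply this
    rw [← hTapp, ← hTapp, h]
  -- the positive orthant
  set Q : Set (Fin d → ℝ) := {t | ∀ j, 0 ≤ t j} with hQdef
  have hQpi : Q = Set.pi Set.univ (fun _ : Fin d => Set.Ici (0 : ℝ)) := by
    ext t; simp [hQdef, Set.mem_pi, Set.mem_Ici, Pi.le_def]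
  have hQ : MeasurableSet Q := by
    rw [hQpi]; exact MeasurableSet.univ_pi fun _ => measurableSet_Ici
  have hcone_eq : ∀ a, maxCone gen a = (T a) '' Q := by
    intro a
    ext x
    constructor
    · rintro ⟨t, ht, rfl⟩
      exact ⟨t, ht, by rw [hTapp, ← hsum_eq]⟩
    · rintro ⟨t, ht, rfl⟩
      exact ⟨t, ht, by rw [hTapp, ← hsum_eq]⟩
  -- inverse description of the cones
  have hinv_can : ∀ a (t : Fin d → ℝ), ((A a)ᵀ)⁻¹.mulVec ((A a)ᵀ.mulVec t) = t := by
    intro a t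
    rw [Matrix.mulVec_mulVec, Matrix.nonsing_inv_mul _ (hunitT a), Matrix.one_mulVec]
  have hcone_pre : ∀ a, maxCone gen a = (fun x => ((A a)ᵀ)⁻¹.mulVec x) ⁻¹' Q := by
    intro a
    ext x
    constructor
    · rintro ⟨t, ht, rfl⟩
      rw [Set.mem_preimage, hsum_eq, hinv_can]
      exact ht
    · intro hx
      refine ⟨((A a)ᵀ)⁻¹.mulVec x, hx, ?_⟩
      rw [hsum_eq, Matrix.mulVec_mulVec, Matrix.mul_nonsing_inv _ (hunitT a),
        Matrix.one_mulVec]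
  have hinvcont : ∀ a, Continuous (fun x : Fin d → ℝ => ((A a)ᵀ)⁻¹.mulVec x) := by
    intro a
    exact LinearMap.continuous_of_finiteDimensional (Matrix.toLin' ((A a)ᵀ)⁻¹) |>.congr
      (fun x => by rw [Matrix.toLin'_apply])
  have hconemeas : ∀ a, MeasurableSet (maxCone gen a) := by
    intro a
    rw [hcone_pre a]
    exact hQ.preimage (hinvcont a).measurable
  -- measurability of φ
  set L : Fin N → (Fin d → ℝ) → ℂ :=
    fun a x => ∑ j, ((((A a)ᵀ)⁻¹.mulVec x j : ℝ) : ℂ) * sval (gen a j) with hL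
  have hLcont : ∀ a, Continuous (L a) := by
    intro a
    refine continuous_finset_sum _ fun j _ => ?_
    exact (Complex.continuous_ofReal.comp ((continuous_apply j).comp (hinvcont a))).mul
      continuous_const
  have hkey : ∀ a, ∀ x ∈ maxCone gen a, φ x = L a x := by
    rintro a x ⟨t, ht, rfl⟩
    rw [hφ a t ht, hL]
    simp only
    rw [hsum_eq, hinv_can]
  have hφmeas : Measurable φ := by
    intro B hB
    have hpre : φ ⁻¹' B = ⋃ a, (maxCone gen a ∩ L a ⁻¹' B) := by
      ext x
      simp only [Set.mem_preimage, Set.mem_iUnion, Set.mem_inter_iff]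
      constructor
      · intro hx
        have hx' : x ∈ ⋃ a, maxCone gen a := by rw [hcover]; trivial
        obtain ⟨a, ha⟩ := Set.mem_iUnion.mp hx'
        exact ⟨a, ha, by rw [← hkey a x ha]; exact hx⟩
      · rintro ⟨a, ha, hb⟩
        rwa [hkey a x ha]
    rw [hpre]
    exact MeasurableSet.iUnion fun a =>
      (hconemeas a).inter (hB.preimage (hLcont a).measurable)
  -- the integrand
  set g : (Fin d → ℝ) → ℂ :=
    fun x => Complex.exp (-φ x - Complex.I * ((∑ i, x i * m i : ℝ) : ℂ)) with hg
  have hgmeas : Measurable g := by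
    apply Complex.measurable_exp.comp
    apply Measurable.sub hφmeas.neg
    apply Measurable.const_mul
    exact Complex.measurable_ofReal.comp
      (Finset.measurable_sum _ fun i _ => (measurable_pi_apply i).mul_const _)
  -- the coefficients
  set c : Fin N → Fin d → ℂ :=
    fun a j => sval (gen a j) + Complex.I * ((∑ i, (gen a j i : ℝ) * m i : ℝ) : ℂ) with hc
  have hcre : ∀ a j, 0 < (c a j).re := by
    intro a j
    have : (c a j).re = (sval (gen a j)).re := by
      simp [hc, Complex.add_re, Complex.mul_re]
    rw [this]; exact hre a j
  -- pointwise identity on the orthant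
  have hgT : ∀ a, ∀ t ∈ Q, g (T a t) = ∏ j, Complex.exp (-(c a j * t j)) := by
    intro a t ht
    have h1 : φ (T a t) = ∑ j, (t j : ℂ) * sval (gen a j) := by
      rw [hTapp, ← hsum_eq, hφ a t ht]
    have h2 : (∑ i, T a t i * m i) = ∑ j, t j * (∑ i, (gen a j i : ℝ) * m i) := by
      calc (∑ i, T a t i * m i) = ∑ i, ∑ j, (gen a j i : ℝ) * t j * m i := by
            refine Finset.sum_congr rfl fun i _ => ?_
            rw [hTapp]
            simp [Matrix.mulVec, dotProduct, Matrix.transpose_apply, hA,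
              Finset.sum_mul]
        _ = ∑ j, ∑ i, (gen a j i : ℝ) * t j * m i := Finset.sum_comm
        _ = ∑ j, t j * (∑ i, (gen a j i : ℝ) * m i) := by
            refine Finset.sum_congr rfl fun j _ => ?_
            rw [Finset.mul_sum]
            exact Finset.sum_congr rfl fun i _ => by ring
    have h3 : -φ (T a t) - Complex.I * ((∑ i, T a t i * m i : ℝ) : ℂ)
        = ∑ j, -(c a j * (t j : ℂ)) := by
      rw [h1, h2]
      push_cast
      rw [Finset.mul_sum, ← Finset.sum_neg_distrib, sub_eq_add_neg,
        ← Finset.sum_neg_distrib, ← Finset.sum_add_distrib]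
      refine Finset.sum_congr rfl fun j _ => ?_
      simp only [hc]
      push_cast
      ring
    rw [hg]
    simp only
    rw [h3, Complex.exp_sum]
  -- indicator factorization on the orthant
  have hGeq : ∀ a (t : Fin d → ℝ),
      Q.indicator (fun t => ∏ j, Complex.exp (-(c a j * t j))) t
        = ∏ j, (Set.Ici (0 : ℝ)).indicator
            (fun u : ℝ => Complex.exp (-(c a j * u))) (t j) := by
    intro a t
    by_cases ht : t ∈ Q
    · rw [Set.indicator_of_mem ht]
      exact Finset.prod_congr rfl fun j _ =>
        (Set.indicator_of_mem (Set.mem_Ici.mpr (ht j))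
          (fun u : ℝ => Complex.exp (-(c a j * u)))).symm
    · rw [Set.indicator_of_notMem ht]
      obtain ⟨j, hj⟩ := not_forall.mp ht
      exact (Finset.prod_eq_zero (Finset.mem_univ j)
        (by rw [Set.indicator_of_notMem (by simpa using hj)])).symm
  -- the orthant integral factorizes
  have horth : ∀ a, (∫ t in Q, ∏ j, Complex.exp (-(c a j * t j))) = ∏ j, (c a j)⁻¹ := by
    intro a
    rw [← integral_indicator hQ]
    calc (∫ t : Fin d → ℝ, Q.indicator (fun t => ∏ j, Complex.exp (-(c a j * t j))) t)
        = ∫ t : Fin d → ℝ, ∏ j, (Set.Ici (0 : ℝ)).indicator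
            (fun u : ℝ => Complex.exp (-(c a j * u))) (t j) := by
          exact integral_congr_ae (Filter.Eventually.of_forall (hGeq a))
      _ = ∏ j, ∫ u : ℝ, (Set.Ici (0 : ℝ)).indicator
            (fun u : ℝ => Complex.exp (-(c a j * u))) u :=
          integral_fintype_prod_eq_prod
            (fun j (u : ℝ) => (Set.Ici (0 : ℝ)).indicator
              (fun u : ℝ => Complex.exp (-(c a j * u))) u)
      _ = ∏ j, (c a j)⁻¹ := by
          refine Finset.prod_congr rfl fun j _ => ?_
          rw [integral_indicator measurableSet_Ici, MeasureTheory.integral_Ici_eq_integral_Ioi,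
            aux_integral_cexp (hcre a j)]
  -- integrability on the orthant
  have hintQ : ∀ a, IntegrableOn (fun t : Fin d → ℝ => ∏ j, Complex.exp (-(c a j * t j))) Q := by
    intro a
    rw [← integrable_indicator_iff hQ]
    have heq : (Q.indicator fun t : Fin d → ℝ => ∏ j, Complex.exp (-(c a j * t j)))
        = fun t : Fin d → ℝ => ∏ j, (Set.Ici (0 : ℝ)).indicator
            (fun u : ℝ => Complex.exp (-(c a j * u))) (t j) := funext (hGeq a)
    rw [heq]
    exact Integrable.fintype_prod fun j =>
      (integrable_indicator_iff measurableSet_Ici).mpr (aux_integrableOn_cexp (hcre a j))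
  -- change of variables
  have hFDeriv : ∀ a, ∀ t ∈ Q, HasFDerivWithinAt (⇑(T a)) (T a) Q t :=
    fun a t _ => (T a).hasFDerivAt.hasFDerivWithinAt
  have hcov : ∀ a, (∫ x in maxCone gen a, g x) = ∏ j, (c a j)⁻¹ := by
    intro a
    rw [hcone_eq a,
      integral_image_eq_integral_abs_det_fderiv_smul volume hQ (hFDeriv a)
        ((hTinj a).injOn) g]
    simp only [hTdet a, one_smul]
    rw [setIntegral_congr_fun hQ (fun t ht => hgT a t ht)]
    exact horth a
  have hintcone : ∀ a, IntegrableOn g (maxCone gen a) := by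
    intro a
    rw [hcone_eq a,
      integrableOn_image_iff_integrableOn_abs_det_fderiv_smul volume hQ (hFDeriv a)
        ((hTinj a).injOn) g]
    refine (hintQ a).congr_fun (fun t ht => ?_) hQ
    simp only [hTdet a, one_smul]
    exact (hgT a t ht).symm
  -- put everything together
  have hint : IntegrableOn g (⋃ a, maxCone gen a) :=
    integrableOn_finite_iUnion.mpr hintcone
  have hAE : Pairwise (Function.onFun (MeasureTheory.AEDisjoint volume)
      fun a => maxCone gen a) := fun a b hab => hdisj a b hab
  calc (∫ x : Fin d → ℝ, Complex.exp (-φ x - Complex.I * ((∑ i, x i * m i : ℝ) : ℂ)))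
      = ∫ x in ⋃ a, maxCone gen a, g x := by rw [hcover, Measure.restrict_univ]
    _ = ∑' a, ∫ x in maxCone gen a, g x :=
        integral_iUnion_ae (fun a => (hconemeas a).nullMeasurableSet) hAE hint
    _ = ∑ a, ∫ x in maxCone gen a, g x := tsum_fintype _
    _ = ∑ a, ∏ j, (c a j)⁻¹ := Finset.sum_congr rfl fun a _ => hcov a
end

section
/- Let Σ be a complete regular fan in ℤ^d invariant under a finite group G_v acting on the lattice, with Σ(1) decomposed into G_v-orbits Σ₁(1), …, Σ_l(1) of lengths d₁, …, d_l. Define for each G_v-invariant cone σ with 1-dimensional faces forming orbits Σ_{j₁}(1), …, Σ_{j_k}(1) the rational function R_σ(u) = ∏_{a=1}^{k} u_{j_a}^{d_{j_a}} / (1 − u_{j_a}^{d_{j_a}}), and define Q_Σ by Σ_{σ ∈ Σ^{G_v}} R_σ(u) = Q_Σ(u₁,…,u_l) / ∏_{j=1}^{l} (1 − u_j^{d_j}). Then the polynomial Q_Σ(u₁,…,u_l) − 1 contains only monomials of total degree ≥ 2. -/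
open scoped Classical

lemma QS_coeff_term (l : ℕ) (d : Fin l → ℕ) (J : Finset (Fin l)) (m : Fin l →₀ ℕ) :
    MvPolynomial.coeff m ((∏ j ∈ J, (MvPolynomial.X j : MvPolynomial (Fin l) ℚ) ^ d j) *
        ∏ j ∈ Finset.univ \ J, (1 - MvPolynomial.X j ^ d j))
    = ∑ T ∈ (Finset.univ \ J).powerset,
        (if (∑ j ∈ J, Finsupp.single j (d j)) + (∑ j ∈ T, Finsupp.single j (d j)) = m
          then ((-1 : ℚ)) ^ T.card else 0) := by
  have h1 : ∀ A : Finset (Fin l), ∏ j ∈ A, (MvPolynomial.X j : MvPolynomial (Fin l) ℚ) ^ d j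
      = MvPolynomial.monomial (∑ j ∈ A, Finsupp.single j (d j)) 1 := by
    intro A
    induction A using Finset.cons_induction with
    | empty => simp
    | cons a s ha ih =>
      rw [Finset.prod_cons, ih, MvPolynomial.X_pow_eq_monomial, MvPolynomial.monomial_mul,
        Finset.sum_cons, one_mul]
  have h1' : ∀ A : Finset (Fin l), ∏ j ∈ A, (-(MvPolynomial.X j ^ d j) : MvPolynomial (Fin l) ℚ)
      = MvPolynomial.monomial (∑ j ∈ A, Finsupp.single j (d j)) ((-1 : ℚ) ^ A.card) := by
    intro A
    induction A using Finset.cons_induction with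
    | empty => simp
    | cons a s ha ih =>
      rw [Finset.prod_cons, ih, Finset.sum_cons, Finset.card_cons,
        show (-(MvPolynomial.X a ^ d a) : MvPolynomial (Fin l) ℚ)
          = MvPolynomial.monomial (Finsupp.single a (d a)) (-1 : ℚ) by
            rw [MvPolynomial.X_pow_eq_monomial]; simp,
        MvPolynomial.monomial_mul]
      congr 1
      ring
  have h2 : ∀ j ∈ Finset.univ \ J, (1 - MvPolynomial.X j ^ d j : MvPolynomial (Fin l) ℚ)
      = -(MvPolynomial.X j ^ d j) + 1 := fun j _ => by ring
  rw [Finset.prod_congr rfl h2, Finset.prod_add, Finset.mul_sum, MvPolynomial.coeff_sum]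
  refine Finset.sum_congr rfl fun T hT => ?_
  rw [Finset.prod_const_one, mul_one, h1, h1', MvPolynomial.monomial_mul, one_mul,
    MvPolynomial.coeff_monomial]


/-- for a complete regular `G_v`-invariant fan `Σ` (encoded by its rays
`rays : Fin n → ℤ^d`, a `G`-action permuting the rays compatibly with a linear action
on the lattice, the decomposition of `Σ(1)` into orbits `orb : Fin n → Fin l` of sizes
`dd j`, and the simplicial cones `Scones`, closed under faces and under the `G`-action),
the polynomial
`Q_Σ(u) = Σ_{σ ∈ Σ^{G}} ∏_{j ∈ J_σ} u_j^{d_j} · ∏_{j ∉ J_σ} (1 − u_j^{d_j})`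
(which satisfies `Σ_σ R_σ = Q_Σ / ∏_j (1 − u_j^{d_j})`) is such that `Q_Σ − 1`
contains only monomials of total degree ≥ 2. -/
theorem QSigma_sub_one_degree_ge_two (d n l : ℕ) (G : Type) [Group G] [Finite G]
    (ρ : G →* ((Fin d → ℤ) ≃ₗ[ℤ] (Fin d → ℤ)))
    (π : G →* Equiv.Perm (Fin n))
    (rays : Fin n → (Fin d → ℤ))
    (hequiv : ∀ g i, ρ g (rays i) = rays (π g i))
    (orb : Fin n → Fin l) (horb : Function.Surjective orb)
    (horb2 : ∀ i i', orb i = orb i' ↔ ∃ g, π g i = i')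
    (Scones : Finset (Finset (Fin n)))
    (hempty : ∅ ∈ Scones) (hsingle : ∀ i, {i} ∈ Scones)
    (hface : ∀ S ∈ Scones, ∀ S' ⊆ S, S' ∈ Scones)
    (hGinv : ∀ S ∈ Scones, ∀ g, S.image (π g) ∈ Scones)
    (hindep : ∀ S ∈ Scones, LinearIndependent ℤ (fun i : ↥S => rays i))
    (hcomplete : (⋃ S ∈ Scones, {x : Fin d → ℝ | ∃ c : Fin n → ℝ, (∀ i, 0 ≤ c i) ∧
      x = ∑ i ∈ S, c i • fun t => ((rays i t : ℝ))}) = Set.univ)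
    (dd : Fin l → ℕ)
    (hdd : ∀ j, dd j = (Finset.univ.filter (fun i => orb i = j)).card) :
    ∀ m : Fin l →₀ ℕ, (m.sum fun _ e => e) ≤ 1 →
      MvPolynomial.coeff m
        ((∑ S ∈ Scones.filter (fun S => ∀ g : G, S.image (π g) = S),
            (∏ j ∈ S.image orb, (MvPolynomial.X j : MvPolynomial (Fin l) ℚ) ^ dd j) *
              ∏ j ∈ Finset.univ \ S.image orb, (1 - MvPolynomial.X j ^ dd j)) - 1)
        = 0 := by
  intro m hm
  -- basic facts
  have hd1 : ∀ j, 1 ≤ dd j := by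
    intro j
    rw [hdd j]
    obtain ⟨i, hi⟩ := horb j
    exact Finset.card_pos.mpr ⟨i, by simp [hi]⟩
  set F := Scones.filter (fun S => ∀ g : G, S.image (π g) = S) with hF
  have hFempty : ∅ ∈ F := by
    rw [hF, Finset.mem_filter]
    exact ⟨hempty, fun g => by simp⟩
  have happ : ∀ (A : Finset (Fin l)) (j₀ : Fin l),
      (∑ j ∈ A, Finsupp.single j (dd j)) j₀ = if j₀ ∈ A then dd j₀ else 0 := by
    intro A j₀
    rw [Finset.sum_apply']
    simp [Finsupp.single_apply]
  rw [MvPolynomial.coeff_sub, MvPolynomial.coeff_sum]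
  -- split on total degree
  interval_cases h : (m.sum fun _ e => e)
  · -- m = 0
    have hm0 : m = 0 := by
      ext j
      by_contra hj
      have hjs : j ∈ m.support := Finsupp.mem_support_iff.mpr (by simpa using hj)
      have := Finset.sum_eq_zero_iff.mp h j hjs
      simp at this
      exact hj (by simpa using this)
    subst hm0
    have hco : ∀ S : Finset (Fin n), MvPolynomial.coeff 0
        ((∏ j ∈ S.image orb, (MvPolynomial.X j : MvPolynomial (Fin l) ℚ) ^ dd j) *
          ∏ j ∈ Finset.univ \ S.image orb, (1 - MvPolynomial.X j ^ dd j))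
        = if S = ∅ then 1 else 0 := by
      intro S
      rw [QS_coeff_term]
      rcases eq_or_ne S ∅ with rfl | hS
      · rw [if_pos rfl]
        rw [Finset.sum_eq_single_of_mem ∅ (Finset.empty_mem_powerset _)]
        · simp
        · intro T hT hTne
          rw [if_neg]
          intro hc
          obtain ⟨j₀, hj₀⟩ := Finset.nonempty_iff_ne_empty.mpr hTne
          have := DFunLike.congr_fun hc j₀
          simp only [Finsupp.coe_add, Pi.add_apply, happ] at this
          simp [hj₀] at this
          have := hd1 j₀
          omega
      · rw [if_neg hS]
        refine Finset.sum_eq_zero fun T hT => ?_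
        rw [if_neg]
        intro hc
        obtain ⟨i₀, hi₀⟩ := Finset.nonempty_iff_ne_empty.mpr hS
        have hj₀ : orb i₀ ∈ S.image orb := Finset.mem_image_of_mem _ hi₀
        have := DFunLike.congr_fun hc (orb i₀)
        simp only [Finsupp.coe_add, Pi.add_apply, happ] at this
        simp [hj₀] at this
        have := hd1 (orb i₀)
        omega
    rw [Finset.sum_congr rfl (fun S _ => hco S), Finset.sum_ite_eq' F ∅ (fun _ => (1 : ℚ)),
      if_pos hFempty]
    simp
  · -- m.sum = 1 : m = single j' 1
    obtain ⟨j', hj'⟩ : ∃ j', m = Finsupp.single j' 1 := by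
      have hcard : m.support.card ≤ 1 := by
        calc m.support.card = ∑ j ∈ m.support, 1 := by simp
        _ ≤ ∑ j ∈ m.support, m j := Finset.sum_le_sum fun j hj =>
            Nat.one_le_iff_ne_zero.mpr (Finsupp.mem_support_iff.mp hj)
        _ = 1 := h
      rcases Nat.le_one_iff_eq_zero_or_eq_one.mp hcard with hc | hc
      · exfalso
        have : m = 0 := Finsupp.support_eq_empty.mp (Finset.card_eq_zero.mp hc)
        rw [this] at h
        simp [Finsupp.sum] at h
      · obtain ⟨a, b, hb, hab⟩ := Finsupp.card_support_eq_one'.mp hc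
        refine ⟨a, ?_⟩
        rw [hab] at h ⊢
        rw [Finsupp.sum_single_index (by simp)] at h
        rw [h]
    subst hj'
    have hchar : ∀ (J T : Finset (Fin l)), Disjoint J T →
        (((∑ j ∈ J, Finsupp.single j (dd j)) + (∑ j ∈ T, Finsupp.single j (dd j)))
            = Finsupp.single j' 1
          ↔ dd j' = 1 ∧ ((J = {j'} ∧ T = ∅) ∨ (J = ∅ ∧ T = {j'}))) := by
      intro J T hdisj
      constructor
      · intro hc
        have hval : ∀ j : Fin l,
            (if j ∈ J then dd j else 0) + (if j ∈ T then dd j else 0)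
              = (if j = j' then 1 else 0) := by
          intro j
          have := DFunLike.congr_fun hc j
          simpa [happ, Finsupp.single_apply, eq_comm] using this
        have hJsub : ∀ j ∈ J, j = j' ∧ dd j' = 1 := by
          intro j hj
          have h1 := hval j
          have h2 := hd1 j
          have hnT : j ∉ T := Finset.disjoint_left.mp hdisj hj
          rw [if_pos hj, if_neg hnT] at h1
          by_cases hjj : j = j'
          · subst hjj; rw [if_pos rfl] at h1; omega
          · rw [if_neg hjj] at h1; omega
        have hTsub : ∀ j ∈ T, j = j' ∧ dd j' = 1 := by
          intro j hj
          have h1 := hval j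
          have h2 := hd1 j
          have hnJ : j ∉ J := Finset.disjoint_right.mp hdisj hj
          rw [if_neg hnJ, if_pos hj] at h1
          by_cases hjj : j = j'
          · subst hjj; rw [if_pos rfl] at h1; omega
          · rw [if_neg hjj] at h1; omega
        have hne : J.Nonempty ∨ T.Nonempty := by
          by_contra hcon
          push_neg at hcon
          obtain ⟨h1, h2⟩ := hcon
          rw [h1, h2] at hc
          simp only [Finset.sum_empty, add_zero] at hc
          have := DFunLike.congr_fun hc j'
          simp [Finsupp.single_apply] at this
        rcases hne with h | h
        · obtain ⟨j₀, hj₀⟩ := h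
          obtain ⟨hj₀', hdj⟩ := hJsub j₀ hj₀
          subst hj₀'
          refine ⟨hdj, Or.inl ⟨?_, ?_⟩⟩
          · exact Finset.eq_singleton_iff_unique_mem.mpr ⟨hj₀, fun b hb => (hJsub b hb).1⟩
          · rw [Finset.eq_empty_iff_forall_notMem]
            intro j hj
            have := (hTsub j hj).1
            subst this
            exact Finset.disjoint_left.mp hdisj hj₀ hj
        · obtain ⟨j₀, hj₀⟩ := h
          obtain ⟨hj₀', hdj⟩ := hTsub j₀ hj₀
          subst hj₀'
          refine ⟨hdj, Or.inr ⟨?_, ?_⟩⟩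
          · rw [Finset.eq_empty_iff_forall_notMem]
            intro j hj
            have := (hJsub j hj).1
            subst this
            exact Finset.disjoint_left.mp hdisj hj hj₀
          · exact Finset.eq_singleton_iff_unique_mem.mpr ⟨hj₀, fun b hb => (hTsub b hb).1⟩
      · rintro ⟨hdj, ⟨rfl, rfl⟩ | ⟨rfl, rfl⟩⟩ <;> simp [hdj]
    have hco : ∀ S : Finset (Fin n), MvPolynomial.coeff (Finsupp.single j' 1)
        ((∏ j ∈ S.image orb, (MvPolynomial.X j : MvPolynomial (Fin l) ℚ) ^ dd j) *
          ∏ j ∈ Finset.univ \ S.image orb, (1 - MvPolynomial.X j ^ dd j))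
        = (if S.image orb = {j'} ∧ dd j' = 1 then 1 else 0)
          + (if S = ∅ ∧ dd j' = 1 then -1 else 0) := by
      intro S
      rw [QS_coeff_term]
      have hdisj : ∀ T ∈ (Finset.univ \ S.image orb).powerset, Disjoint (S.image orb) T :=
        fun T hT => Finset.disjoint_left.mpr fun a haJ haT =>
          (Finset.mem_sdiff.mp (Finset.mem_powerset.mp hT haT)).2 haJ
      by_cases hK : dd j' = 1
      · by_cases hJ1 : S.image orb = {j'}
        · have hSne : S ≠ ∅ := by
            intro hS0
            rw [hS0, Finset.image_empty] at hJ1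
            exact Finset.singleton_ne_empty j' hJ1.symm
          rw [Finset.sum_eq_single_of_mem ∅ (Finset.empty_mem_powerset _)
              (fun T hT hT0 => if_neg (fun hc => by
                rcases ((hchar _ _ (hdisj T hT)).mp hc).2 with ⟨-, h2⟩ | ⟨h2, -⟩
                · exact hT0 h2
                · rw [hJ1] at h2; exact Finset.singleton_ne_empty j' h2)),
            if_pos ((hchar _ _ (hdisj ∅ (Finset.empty_mem_powerset _))).mpr
              ⟨hK, Or.inl ⟨hJ1, rfl⟩⟩),
            if_pos ⟨hJ1, hK⟩, if_neg (fun h2 => hSne h2.1)]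
          simp
        · by_cases hJ0 : S.image orb = ∅
          · have hS0 : S = ∅ := Finset.image_eq_empty.mp hJ0
            have hmemT : {j'} ∈ (Finset.univ \ S.image orb).powerset := by
              rw [hJ0]; simp
            rw [Finset.sum_eq_single_of_mem {j'} hmemT
                (fun T hT hT1 => if_neg (fun hc => by
                  rcases ((hchar _ _ (hdisj T hT)).mp hc).2 with ⟨h2, -⟩ | ⟨-, h2⟩
                  · rw [hJ0] at h2; exact Finset.singleton_ne_empty j' h2.symm
                  · exact hT1 h2)),
              if_pos ((hchar _ _ (hdisj _ hmemT)).mpr ⟨hK, Or.inr ⟨hJ0, rfl⟩⟩),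
              if_neg (fun h2 => hJ1 h2.1), if_pos ⟨hS0, hK⟩]
            simp
          · rw [Finset.sum_eq_zero (fun T hT => by
                rw [if_neg]
                intro hc
                rcases ((hchar _ _ (hdisj T hT)).mp hc).2 with ⟨h, -⟩ | ⟨h, -⟩
                · exact hJ1 h
                · exact hJ0 h),
              if_neg (fun h => hJ1 h.1),
              if_neg (fun h => hJ0 (by rw [h.1, Finset.image_empty]))]
            ring
      · rw [Finset.sum_eq_zero (fun T hT =>
            if_neg (fun hc => hK ((hchar _ _ (hdisj T hT)).mp hc).1)),
          if_neg (fun h => hK h.2), if_neg (fun h => hK h.2)]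
        ring
    rw [Finset.sum_congr rfl fun S _ => hco S, Finset.sum_add_distrib]
    have e2 : (∑ S ∈ F, if S = ∅ ∧ dd j' = 1 then (-1:ℚ) else 0)
        = if dd j' = 1 then (-1:ℚ) else 0 := by
      by_cases hK : dd j' = 1
      · rw [if_pos hK]
        have hterm : ∀ S ∈ F, (if S = ∅ ∧ dd j' = 1 then (-1:ℚ) else 0)
            = (if S = ∅ then (-1:ℚ) else 0) := by
          intro S _
          by_cases h0 : S = ∅
          · rw [if_pos ⟨h0, hK⟩, if_pos h0]
          · rw [if_neg (fun hc => h0 hc.1), if_neg h0]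
        rw [Finset.sum_congr rfl hterm, Finset.sum_ite_eq' F ∅ (fun _ => (-1:ℚ)),
          if_pos hFempty]
      · rw [if_neg hK]
        exact Finset.sum_eq_zero fun S _ => if_neg (fun h => hK h.2)
    have e1 : (∑ S ∈ F, if S.image orb = {j'} ∧ dd j' = 1 then (1:ℚ) else 0)
        = if dd j' = 1 then (1:ℚ) else 0 := by
      by_cases hK : dd j' = 1
      · rw [if_pos hK]
        obtain ⟨i₀, hfib⟩ := Finset.card_eq_one.mp (hK ▸ (hdd j').symm)
        have hoi₀ : orb i₀ = j' := by
          have : i₀ ∈ Finset.univ.filter (fun i => orb i = j') := by rw [hfib]; simp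
          simpa using this
        have hiff : ∀ S : Finset (Fin n), S.image orb = {j'} ↔ S = {i₀} := by
          intro S
          constructor
          · intro hIm
            have hne : S.Nonempty := by
              rw [← Finset.image_nonempty (f := orb), hIm]
              simp
            refine (hne.subset_singleton_iff (a := i₀)).mp ?_
            intro i hi
            have h1 : orb i = j' :=
              Finset.mem_singleton.mp (hIm ▸ Finset.mem_image_of_mem orb hi)
            have h2 : i ∈ Finset.univ.filter (fun i => orb i = j') := by simp [h1]
            rwa [hfib] at h2
          · rintro rfl
            rw [Finset.image_singleton, hoi₀]
        have hmem : {i₀} ∈ F := by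
          rw [hF, Finset.mem_filter]
          refine ⟨hsingle i₀, fun g => ?_⟩
          rw [Finset.image_singleton]
          have h1 : orb (π g i₀) = j' := by
            rw [← ((horb2 i₀ (π g i₀)).mpr ⟨g, rfl⟩), hoi₀]
          have h2 : π g i₀ ∈ Finset.univ.filter (fun i => orb i = j') := by simp [h1]
          rw [hfib] at h2
          rw [Finset.mem_singleton.mp h2]
        have hterm : ∀ S ∈ F, (if S.image orb = {j'} ∧ dd j' = 1 then (1:ℚ) else 0)
            = (if S = {i₀} then (1:ℚ) else 0) := by
          intro S _
          by_cases h0 : S = {i₀}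
          · rw [if_pos ⟨(hiff S).mpr h0, hK⟩, if_pos h0]
          · rw [if_neg (fun hc => h0 ((hiff S).mp hc.1)), if_neg h0]
        rw [Finset.sum_congr rfl hterm, Finset.sum_ite_eq' F {i₀} (fun _ => (1:ℚ)),
          if_pos hmem]
      · rw [if_neg hK]
        exact Finset.sum_eq_zero fun S _ => if_neg (fun h => hK h.2)
    have hne0 : ¬((0 : Fin l →₀ ℕ) = Finsupp.single j' 1) := fun hcon =>
      (one_ne_zero (α := ℕ)) (by simpa using (DFunLike.congr_fun hcon.symm j'))
    rw [e1, e2, MvPolynomial.coeff_one, if_neg hne0]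
    by_cases hK : dd j' = 1
    · rw [if_pos hK, if_pos hK]; ring
    · rw [if_neg hK, if_neg hK]; ring
end
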